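/- arXiv:2110.14858 — 3 statements merged into one kernel-verified Lean document; each statement's English description precedes it below -/
import Mathlib

section
/- Let Σ = {a_1 < a_2 < ⋯ < a_s} be an ordered alphabet and [w] a circular word over Σ. Let v_1, …, v_{(s−1)!} be arbitrary representatives, one from each of the (s−1)! conjugacy classes into which the s! slender Parikh words of length s over Σ are partitioned. Then the sum over i = 1, …, (s−1)! of the direct subword count of v_i in [w] equals ∏_{i=1}^{s} |w|_{a_i}. -/
/-- The number of occurrences of `v` as a scattered subword (subsequence) of `w`:
the number of strictly increasing sequences of positions in `w` spelling out `v`. -/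
def subwordCount {α : Type*} [DecidableEq α] (w v : List α) : ℕ :=
  w.sublists.count v

/-- The conjugacy class (circular word) `[w]` of `w`: the set of all cyclic shifts of `w`. -/
def conjClass {α : Type*} [DecidableEq α] (w : List α) : Finset (List α) :=
  insert w ((Finset.range w.length).image w.rotate)

/-- The average subword count of `v` in the circular word `[w]`:
`|[w]|_v = (1/|[w]|) ∑_{u ∈ [w]} |u|_v`. -/
def circCount {α : Type*} [DecidableEq α] (w v : List α) : ℚ :=
  (∑ u ∈ conjClass w, (subwordCount u v : ℚ)) / ((conjClass w).card : ℚ)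

/-- The Parikh matrix of the letter `q` of the ordered alphabet `Fin s`:
the identity matrix with an extra `1` in entry `(q, q+1)`. -/
def parikhLetter {s : ℕ} (q : Fin s) : Matrix (Fin (s + 1)) (Fin (s + 1)) ℚ :=
  1 + Matrix.single q.castSucc q.succ 1

/-- The Parikh matrix mapping over the ordered alphabet `Fin s` (a monoid morphism). -/
def parikhMatrix {s : ℕ} (w : List (Fin s)) : Matrix (Fin (s + 1)) (Fin (s + 1)) ℚ :=
  (w.map parikhLetter).prod

/-- The Parikh matrix of the circular word `[w]`:
`Ψ([w]) = (1/|[w]|) ∑_{u ∈ [w]} Ψ(u)`. -/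
def circParikh {s : ℕ} (w : List (Fin s)) : Matrix (Fin (s + 1)) (Fin (s + 1)) ℚ :=
  (((conjClass w).card : ℚ))⁻¹ • ∑ u ∈ conjClass w, parikhMatrix u

/-- The alternate matrix: `(i,j)` entry is `(-1)^(i+j)` times the `(i,j)` entry of `A`. -/
def altMatrix {n : ℕ} (A : Matrix (Fin n) (Fin n) ℚ) : Matrix (Fin n) (Fin n) ℚ :=
  Matrix.of fun i j => (-1 : ℚ) ^ (i.val + j.val) * A i j

/-- The word `a_i a_{i+1} ⋯ a_j` over the ordered alphabet `Fin s`. -/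
def segWord {s : ℕ} (i j : Fin s) : List (Fin s) :=
  (List.range (j.val - i.val + 1)).attach.map fun t =>
    ⟨i.val + t.1, by
      have ht := List.mem_range.mp t.2
      have hi := i.isLt
      have hj := j.isLt
      omega⟩

section aux
open List Finset

lemma mem_conjClass {α : Type*} [DecidableEq α] {v u : List α} :
    u ∈ conjClass v ↔ v ~r u := by
  constructor
  · intro h
    rcases Finset.mem_insert.mp h with h | h
    · exact ⟨0, by rw [List.rotate_zero, h]⟩
    · rcases Finset.mem_image.mp h with ⟨n, _, hn⟩
      exact ⟨n, hn⟩
  · rintro ⟨n, rfl⟩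
    rcases Nat.eq_zero_or_pos v.length with h0 | h0
    · have : v = [] := List.length_eq_zero_iff.mp h0
      subst this; simp [conjClass]
    · exact Finset.mem_insert_of_mem (Finset.mem_image.mpr
        ⟨n % v.length, Finset.mem_range.mpr (Nat.mod_lt _ h0), List.rotate_mod v n⟩)

lemma countP_sublists'_aux {s : ℕ} (t : List (Fin s)) (S : Finset (Fin s)) :
    t.sublists'.countP (fun u => decide (∀ i, u.count i = if i ∈ S then 1 else 0))
      = ∏ i ∈ S, t.count i := by
  induction t generalizing S with
  | nil =>
    rcases S.eq_empty_or_nonempty with rfl | ⟨j, hj⟩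
    · simp
    · rw [Finset.prod_eq_zero hj (by simp)]
      simp only [List.sublists'_nil, List.countP, List.countP.go]
      have : ¬ (∀ i : Fin s, (0 : ℕ) = if i ∈ S then 1 else 0) := by
        intro h; have := h j; simp [hj] at this
      simp [this]
      rw [decide_eq_false (fun h => h j hj)]; rfl
  | cons a r ih =>
    rw [List.sublists'_cons, List.countP_append, List.countP_map]
    have hcongr : ∀ u : List (Fin s),
        ((fun u => decide (∀ i, u.count i = if i ∈ S then 1 else 0)) ∘ List.cons a) u =
        ((decide (a ∈ S)) &&
          decide (∀ i, u.count i = if i ∈ S.erase a then 1 else 0)) := by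
      intro u
      simp only [Function.comp_apply, Bool.and_eq_true, decide_eq_decide, decide_eq_true_eq,
        ← Bool.decide_and, decide_eq_decide]
      constructor
      · intro h
        have ha := h a
        rw [List.count_cons_self] at ha
        have haS : a ∈ S := by by_contra hc; simp [hc] at ha
        refine ⟨haS, fun i => ?_⟩
        by_cases hia : i = a
        · subst hia
          simp only [Finset.mem_erase, ne_eq, not_true_eq_false, false_and, if_false]
          simp [haS] at ha; omega
        · have := h i
          rw [List.count_cons_of_ne (Ne.symm hia)] at this
          rw [this]
          simp [Finset.mem_erase, hia]
      · rintro ⟨haS, h⟩ i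
        by_cases hia : i = a
        · subst hia
          have := h i
          simp only [Finset.mem_erase, ne_eq, not_true_eq_false, false_and, if_false] at this
          rw [List.count_cons_self, this, if_pos haS]
        · rw [List.count_cons_of_ne (Ne.symm hia), h i]
          simp [Finset.mem_erase, hia]
    have h2 : List.countP ((fun u : List (Fin s) =>
          decide (∀ i, u.count i = if i ∈ S then 1 else 0)) ∘ List.cons a) r.sublists' =
        List.countP (fun u : List (Fin s) => (decide (a ∈ S)) &&
          decide (∀ i, u.count i = if i ∈ S.erase a then 1 else 0)) r.sublists' :=
      List.countP_congr (fun u _ => by rw [hcongr u])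
    rw [h2]
    by_cases haS : a ∈ S
    · have : (fun u : List (Fin s) => (decide (a ∈ S)) &&
          decide (∀ i, u.count i = if i ∈ S.erase a then 1 else 0)) =
          (fun u => decide (∀ i, u.count i = if i ∈ S.erase a then 1 else 0)) := by
        funext u; simp [haS]
      rw [this, ih S, ih (S.erase a)]
      rw [← Finset.mul_prod_erase S _ haS, ← Finset.mul_prod_erase S ((a :: r).count ·) haS]
      have h1 : (a :: r).count a = r.count a + 1 := List.count_cons_self
      have h2 : ∀ i ∈ S.erase a, (a :: r).count i = r.count i := by
        intro i hi
        exact List.count_cons_of_ne (Finset.mem_erase.mp hi).1.symm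
      rw [Finset.prod_congr rfl h2, h1]
      ring
    · have : (fun u : List (Fin s) => (decide (a ∈ S)) &&
          decide (∀ i, u.count i = if i ∈ S.erase a then 1 else 0)) =
          (fun _ => false) := by
        funext u; simp [haS]
      rw [this, ih S]
      simp only [List.countP_false, Nat.add_zero]
      refine Finset.prod_congr rfl fun i hi => ?_
      exact (List.count_cons_of_ne (show a ≠ i by rintro rfl; exact haS hi)).symm

lemma sum_count_eq_countP {β : Type*} [DecidableEq β] (l : List β) (T : Finset β) :
    (∑ u ∈ T, l.count u) = l.countP (fun x => decide (x ∈ T)) := by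
  induction l with
  | nil => simp
  | cons a l ih =>
    rw [List.countP_cons]
    simp only [List.count_cons]
    rw [Finset.sum_add_distrib, ih]
    congr 1
    simp [Finset.sum_ite_eq']

lemma length_eq_sum_count {s : ℕ} (u : List (Fin s)) :
    u.length = ∑ i : Fin s, u.count i := by
  induction u with
  | nil => simp
  | cons a u ih =>
    simp only [List.length_cons, List.count_cons, Finset.sum_add_distrib, ← ih]
    simp [Finset.sum_ite_eq']

end aux


lemma count_irrel {β : Type*} {i1 i2 : BEq β} (h1 : @LawfulBEq β i1) (h2 : @LawfulBEq β i2)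
    (a : β) (l : List β) : @List.count β i1 a l = @List.count β i2 a l := by
  rw [@List.count_eq_countP β i1, @List.count_eq_countP β i2]
  refine List.countP_congr fun x _ => ?_
  exact (@beq_iff_eq β i1 h1 x a).trans (@beq_iff_eq β i2 h2 x a).symm

lemma count_singleton_sublists' {s : ℕ} (i : Fin s) (w : List (Fin s)) :
    @List.count _ instBEqOfDecidableEq [i] w.sublists' = w.count i := by
  have h := countP_sublists'_aux w {i}
  rw [Finset.prod_singleton] at h
  rw [← h, @List.count_eq_countP _ instBEqOfDecidableEq]
  apply List.countP_congr
  intro u _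
  simp only [beq_iff_eq, decide_eq_true_eq, Finset.mem_singleton]
  constructor
  · rintro rfl j
    rw [List.count_singleton]
    rcases eq_or_ne j i with rfl | hji
    · simp
    · rw [if_neg (by simpa using (Ne.symm hji)), if_neg hji]
  · intro h
    have hlen : u.length = 1 := by
      rw [length_eq_sum_count u, Finset.sum_congr rfl (fun j _ => h j)]
      simp
    obtain ⟨b, rfl⟩ := List.length_eq_one_iff.mp hlen
    have hb := h b
    rw [List.count_singleton] at hb
    simp only [beq_self_eq_true, if_true] at hb
    rcases eq_or_ne b i with rfl | hbi
    · rfl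
    · simp [hbi] at hb

lemma subword_eq (s : ℕ) (w u : List (Fin s)) :
    subwordCount w u = @List.count _ instBEqOfDecidableEq u w.sublists' := by
  unfold subwordCount
  rw [@count_irrel (List (Fin s)) List.instBEq instBEqOfDecidableEq inferInstance inferInstance
    u w.sublists]
  have := (List.sublists_perm_sublists' w).count_eq u
  simp only [@count_irrel (List (Fin s)) List.instBEq instBEqOfDecidableEq inferInstance inferInstance
    u w.sublists, @count_irrel (List (Fin s)) List.instBEq instBEqOfDecidableEq inferInstance
    inferInstance u w.sublists'] at this
  exact this

/-- Proposition 8: if `V` consists of representatives, one from each conjugacy class of the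
slender Parikh words of length `s` over `Fin s`, then the sum over `v ∈ V` of the direct
subword counts `|[w]|_v = ∑_{u ∈ [v]} |w|_u` equals `∏ i, |w|_{a_i}`. -/
theorem stmt_2 (s : ℕ) (w : List (Fin s)) (V : Finset (List (Fin s)))
    (hslender : ∀ v ∈ V, v.length = s ∧ ∀ i : Fin s, v.count i ≤ 1)
    (hdistinct : ∀ v ∈ V, ∀ v' ∈ V, v ≠ v' → v' ∉ conjClass v)
    (hcover : ∀ u : List (Fin s), u.length = s → (∀ i : Fin s, u.count i ≤ 1) →
      ∃ v ∈ V, u ∈ conjClass v) :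
    ∑ v ∈ V, ∑ u ∈ conjClass v, subwordCount w u = ∏ i : Fin s, subwordCount w [i] := by
  classical
  have hdisj : (↑V : Set (List (Fin s))).PairwiseDisjoint conjClass := by
    intro v hv v' hv' hne
    refine Finset.disjoint_left.mpr fun u hu hu' => ?_
    have h1 : v ~r u := mem_conjClass.mp hu
    have h2 : v' ~r u := mem_conjClass.mp hu'
    exact hdistinct v hv v' hv' hne (mem_conjClass.mpr (h1.trans h2.symm))
  rw [← Finset.sum_biUnion hdisj]
  set T := V.biUnion conjClass with hT
  have hmemT : ∀ u : List (Fin s), u ∈ T ↔ ∀ i : Fin s, u.count i = 1 := by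
    intro u
    constructor
    · intro hu
      rcases Finset.mem_biUnion.mp hu with ⟨v, hv, huv⟩
      have hperm := (mem_conjClass.mp huv).perm
      obtain ⟨hlen, hcnt⟩ := hslender v hv
      have hcnt' : ∀ i, u.count i ≤ 1 := fun i => (hperm.count_eq i) ▸ hcnt i
      have hlen' : u.length = s := by rw [← hperm.length_eq, hlen]
      intro i
      by_contra hne1
      have hsum : ∑ j : Fin s, u.count j = s := by
        rw [← length_eq_sum_count, hlen']
      have hlt : ∑ j : Fin s, u.count j < ∑ _j : Fin s, 1 :=
        Finset.sum_lt_sum (fun j _ => hcnt' j)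
          ⟨i, Finset.mem_univ i, by have := hcnt' i; omega⟩
      simp at hlt
      omega
    · intro hu
      have hlen : u.length = s := by
        rw [length_eq_sum_count]; simp [hu]
      obtain ⟨v, hv, huv⟩ := hcover u hlen (fun i => (hu i).le)
      exact Finset.mem_biUnion.mpr ⟨v, hv, huv⟩
  calc ∑ u ∈ T, subwordCount w u
      = w.sublists'.countP (fun x => decide (x ∈ T)) := by
        rw [← sum_count_eq_countP]
        exact Finset.sum_congr rfl (fun u _ => subword_eq s w u)
    _ = w.sublists'.countP (fun u => decide (∀ i, u.count i =
          if i ∈ (Finset.univ : Finset (Fin s)) then 1 else 0)) := by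
        apply List.countP_congr
        intro u _
        simp only [decide_eq_true_eq, Finset.mem_univ, if_true]
        exact hmemT u
    _ = ∏ i ∈ Finset.univ, w.count i := countP_sublists'_aux w Finset.univ
    _ = ∏ i : Fin s, subwordCount w [i] := by
        refine Finset.prod_congr rfl fun i _ => ?_
        rw [subword_eq s w [i], count_singleton_sublists']
end

section
/- Let Σ = {a_1 < a_2 < ⋯ < a_s} be an ordered alphabet and [w] a circular word over Σ. The matrix M = Ψ_Σ([w]) satisfies: M_{i,i} = 1 for 1 ≤ i ≤ s+1; M_{i,j} = 0 for 1 ≤ j < i ≤ s+1; and M_{i,j+1} = |[w]|_{a_i a_{i+1} ⋯ a_j} for 1 ≤ i ≤ j ≤ s. -/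
/-! Auxiliary lemmas -/

theorem my_count_perm {α : Type*} [BEq α] {l₁ l₂ : List α} (p : l₁.Perm l₂) (a : α) :
    List.count a l₁ = List.count a l₂ := p.countP_eq _

theorem my_count_map {α β : Type*} [BEq α] [LawfulBEq α] [BEq β] [LawfulBEq β]
    (f : α → β) (hf : Function.Injective f) (l : List α) (a : α) :
    List.count (f a) (l.map f) = List.count a l := by
  rw [List.count, List.countP_map, List.count]
  congr 1
  funext x
  simp only [Function.comp_apply]
  by_cases hx : x = a
  · subst hx; simp
  · have h1 : (x == a) = false := beq_eq_false_iff_ne.mpr hx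
    have h2 : (f x == f a) = false := beq_eq_false_iff_ne.mpr (fun e => hx (hf e))
    rw [h1, h2]

def idxWord {s : ℕ} (i j : Fin (s + 1)) : List (Fin s) :=
  (List.range (j.val - i.val)).attach.map fun t =>
    ⟨i.val + t.1, by have := List.mem_range.mp t.2; have := j.isLt; omega⟩

lemma idxWord_self {s : ℕ} (i : Fin (s+1)) : idxWord i i = [] := by
  simp [idxWord]

lemma idxWord_eq_nil_iff {s : ℕ} {i j : Fin (s+1)} (h : i ≤ j) :
    idxWord i j = [] ↔ i = j := by
  constructor
  · intro he
    have hl : (idxWord i j).length = 0 := by simp [he]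
    have hv : i.val ≤ j.val := h
    simp [idxWord] at hl
    exact Fin.ext (by omega)
  · rintro rfl; exact idxWord_self i

lemma idxWord_cons {s : ℕ} (a : Fin s) (j : Fin (s+1)) (h : a.castSucc < j) :
    idxWord a.castSucc j = a :: idxWord a.succ j := by
  have hv : a.val < j.val := h
  apply List.ext_getElem
  · simp only [idxWord, List.length_map, List.length_attach, List.length_range,
      List.length_cons, Fin.coe_castSucc, Fin.val_succ]
    omega
  · intro n h1 h2
    rcases n with _ | k
    · simp [idxWord]
    · simp only [idxWord, List.getElem_map, List.getElem_attach, List.getElem_cons_succ]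
      apply Fin.ext
      simp only [Fin.coe_castSucc, Fin.val_succ, List.getElem_range]
      omega

lemma subwordCount_nil_left {α : Type*} [DecidableEq α] (v : List α) :
    subwordCount [] v = if v = [] then 1 else 0 := by
  unfold subwordCount
  rw [List.sublists_nil]
  by_cases h : v = [] <;> simp [h, List.count_cons, eq_comm]

lemma subwordCount_nil_right {α : Type*} [DecidableEq α] (w : List α) :
    subwordCount w [] = 1 := by
  induction w with
  | nil => simp [subwordCount]
  | cons a t ih =>
    unfold subwordCount at *
    rw [my_count_perm (List.sublists_perm_sublists' (a :: t)), List.sublists'_cons,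
      List.count_append, ← my_count_perm (List.sublists_perm_sublists' t), ih]
    have h0 : List.count ([] : List α) (List.map (List.cons a) t.sublists') = 0 := by
      apply List.count_eq_zero_of_not_mem
      simp
    omega

lemma subwordCount_cons_cons {α : Type*} [DecidableEq α] (a b : α) (t v : List α) :
    subwordCount (a :: t) (b :: v) =
      subwordCount t (b :: v) + if b = a then subwordCount t v else 0 := by
  unfold subwordCount
  rw [my_count_perm (List.sublists_perm_sublists' (a :: t)), List.sublists'_cons,
    List.count_append, ← my_count_perm (List.sublists_perm_sublists' t)]
  congr 1
  by_cases hb : b = a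
  · subst hb
    rw [if_pos rfl, my_count_perm (List.sublists_perm_sublists' t)]
    exact my_count_map _ (fun x y hxy => by injection hxy) _ v
  · rw [if_neg hb]
    apply List.count_eq_zero_of_not_mem
    simp only [List.mem_map, not_exists, not_and]
    rintro x _ hx
    exact hb (by injection hx.symm)

lemma parikhMatrix_cons {s : ℕ} (a : Fin s) (w : List (Fin s)) (i j : Fin (s+1)) :
    parikhMatrix (a :: w) i j =
      parikhMatrix w i j +
        if i = a.castSucc then parikhMatrix w a.succ j else 0 := by
  have hm : parikhMatrix (a :: w) =
      (1 + Matrix.single a.castSucc a.succ (1 : ℚ)) * parikhMatrix w := by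
    simp [parikhMatrix, parikhLetter]
  rw [hm, Matrix.add_mul, Matrix.one_mul, Matrix.add_apply]
  congr 1
  by_cases hi : i = a.castSucc
  · subst hi
    rw [if_pos rfl, Matrix.single_mul_apply_same, one_mul]
  · rw [if_neg hi, Matrix.single_mul_apply_of_ne (h := hi)]

lemma parikhMatrix_lower {s : ℕ} (w : List (Fin s)) :
    ∀ i j : Fin (s+1), j < i → parikhMatrix w i j = 0 := by
  induction w with
  | nil => intro i j h; simp [parikhMatrix, Matrix.one_apply, (Fin.ne_of_lt h).symm]
  | cons a t ih =>
    intro i j h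
    rw [parikhMatrix_cons, ih i j h]
    split
    · rename_i hi
      rw [ih a.succ j (lt_trans h (hi ▸ Fin.castSucc_lt_succ (i := a)))]; ring
    · ring

lemma parikhMatrix_entry {s : ℕ} (w : List (Fin s)) :
    ∀ i j : Fin (s+1), i ≤ j →
      parikhMatrix w i j = (subwordCount w (idxWord i j) : ℚ) := by
  induction w with
  | nil =>
    intro i j h
    rw [subwordCount_nil_left]
    by_cases hij : i = j
    · simp [parikhMatrix, Matrix.one_apply, hij, idxWord_self]
    · have hne : ¬ idxWord i j = [] := fun he => hij ((idxWord_eq_nil_iff h).mp he)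
      simp [parikhMatrix, Matrix.one_apply, hij, hne]
  | cons a t ih =>
    intro i j h
    rw [parikhMatrix_cons]
    rcases eq_or_lt_of_le h with rfl | hlt
    · rw [idxWord_self, subwordCount_nil_right, ih i i le_rfl, idxWord_self,
        subwordCount_nil_right]
      split
      · rename_i hi
        rw [parikhMatrix_lower t a.succ i (hi ▸ Fin.castSucc_lt_succ (i := a))]
        norm_num
      · norm_num
    · have his : i.val < s := by
        have h1 : i.val < j.val := hlt
        have := j.isLt
        omega
      set a' : Fin s := ⟨i.val, his⟩ with ha'
      have hic : i = a'.castSucc := by apply Fin.ext; simp [ha']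
      have hcons : idxWord i j = a' :: idxWord a'.succ j := by
        rw [hic]; exact idxWord_cons a' j (hic ▸ hlt)
      rw [ih i j h, hcons, subwordCount_cons_cons, Nat.cast_add]
      congr 1
      by_cases ha : a' = a
      · subst ha
        rw [if_pos hic, if_pos rfl]
        exact ih a'.succ j (Fin.castSucc_lt_iff_succ_le.mp (hic ▸ hlt))
      · rw [if_neg (fun hx => ha (Fin.castSucc_injective s (hic ▸ hx).symm).symm),
          if_neg ha]
        norm_num

lemma segWord_eq_idxWord {s : ℕ} (i j : Fin s) (h : i ≤ j) :
    segWord i j = idxWord i.castSucc j.succ := by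
  have hv : i.val ≤ j.val := h
  apply List.ext_getElem
  · simp [segWord, idxWord]
    omega
  · intro n h1 h2
    simp only [segWord, idxWord, List.getElem_map, List.getElem_attach]
    apply Fin.ext
    simp

/-- Theorem 17: the entries of the Parikh matrix `M = Ψ_Σ([w])` of a circular word `[w]` over
`{a_1 < ⋯ < a_s} = Fin s`: unit diagonal, zero below the diagonal, and
`M_{i,j+1} = |[w]|_{a_i a_{i+1} ⋯ a_j}` for `i ≤ j`. -/
theorem stmt_5 (s : ℕ) (w : List (Fin s)) :
    (∀ i : Fin (s + 1), circParikh w i i = 1) ∧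
    (∀ i j : Fin (s + 1), j < i → circParikh w i j = 0) ∧
    (∀ i j : Fin s, i ≤ j →
      circParikh w i.castSucc j.succ = circCount w (segWord i j)) := by
  have hmem : w ∈ conjClass w := Finset.mem_insert_self _ _
  have hcard : ((conjClass w).card : ℚ) ≠ 0 := by
    exact_mod_cast Finset.card_ne_zero_of_mem hmem
  refine ⟨?_, ?_, ?_⟩
  · intro i
    have : ∀ u ∈ conjClass w, parikhMatrix u i i = 1 := by
      intro u _
      rw [parikhMatrix_entry u i i le_rfl, idxWord_self, subwordCount_nil_right]
      norm_num
    simp only [circParikh, Matrix.smul_apply, Matrix.sum_apply,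
      Finset.sum_congr rfl this, Finset.sum_const, nsmul_eq_mul, mul_one, smul_eq_mul]
    exact inv_mul_cancel₀ hcard
  · intro i j hji
    have : ∀ u ∈ conjClass w, parikhMatrix u i j = 0 :=
      fun u _ => parikhMatrix_lower u i j hji
    simp only [circParikh, Matrix.smul_apply, Matrix.sum_apply,
      Finset.sum_congr rfl this, Finset.sum_const_zero, smul_eq_mul, mul_zero]
  · intro i j hij
    have : ∀ u ∈ conjClass w, parikhMatrix u i.castSucc j.succ
        = (subwordCount u (segWord i j) : ℚ) := by
      intro u _
      rw [segWord_eq_idxWord i j hij]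
      exact parikhMatrix_entry u _ _ (le_of_lt (by
        exact lt_of_le_of_lt (by exact_mod_cast hij) (Fin.castSucc_lt_succ (i := j))))
    simp only [circParikh, Matrix.smul_apply, Matrix.sum_apply,
      Finset.sum_congr rfl this, smul_eq_mul, circCount]
    rw [div_eq_inv_mul]
end

section
/- Let Σ = {a < b < c} be the ternary ordered alphabet, w ∈ Σ*, and p a positive integer. Then the Parikh matrix of the circular word [w^p] equals the p-th power of the Parikh matrix of [w]: Ψ_Σ([w^p]) = (Ψ_Σ([w]))^p. -/
lemma flatten_replicate_nil {α : Type*} (p : ℕ) :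
    (List.replicate p ([] : List α)).flatten = [] := by
  induction p with
  | zero => rfl
  | succ q ih => simp [List.replicate_succ, ih]

lemma flatten_replicate_append {α : Type*} (p : ℕ) (u v : List α) :
    (List.replicate p (u ++ v)).flatten ++ u = u ++ (List.replicate p (v ++ u)).flatten := by
  induction p with
  | zero => simp
  | succ q ih => simp only [List.replicate_succ, List.flatten_cons, List.append_assoc, ih]

lemma flatten_replicate_rotate_one {α : Type*} (p : ℕ) (u : List α) :
    ((List.replicate p u).flatten).rotate 1 = (List.replicate p (u.rotate 1)).flatten := by
  cases u with
  | nil => simp [flatten_replicate_nil]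
  | cons a t =>
    have hrot : (a :: t).rotate 1 = t ++ [a] := by
      simpa using List.rotate_cons_succ t a 0
    rw [hrot]
    cases p with
    | zero => rfl
    | succ q =>
      have key := flatten_replicate_append q [a] t
      simp only [List.singleton_append] at key
      have hrot2 : ((a :: t) ++ (List.replicate q (a :: t)).flatten).rotate 1
          = (t ++ (List.replicate q (a :: t)).flatten) ++ [a] := by
        simpa using List.rotate_cons_succ (t ++ (List.replicate q (a :: t)).flatten) a 0
      simp only [List.replicate_succ, List.flatten_cons]
      rw [hrot2, List.append_assoc, key]
      simp
lemma flatten_replicate_rotate {α : Type*} (p r : ℕ) (u : List α) :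
    ((List.replicate p u).flatten).rotate r = (List.replicate p (u.rotate r)).flatten := by
  induction r with
  | zero => simp
  | succ r ih =>
    rw [← List.rotate_rotate _ r 1, ih, flatten_replicate_rotate_one, List.rotate_rotate]

lemma length_flatten_replicate {α : Type*} (p : ℕ) (u : List α) :
    (List.replicate p u).flatten.length = p * u.length := by
  induction p with
  | zero => simp
  | succ q ih => simp [List.replicate_succ, ih]; ring

lemma conjClass_eq_image {α : Type*} [DecidableEq α] (w : List α) (hw : w ≠ []) :
    conjClass w = (Finset.range w.length).image w.rotate := by
  have : w ∈ (Finset.range w.length).image w.rotate :=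
    Finset.mem_image.2 ⟨0, Finset.mem_range.2 (List.length_pos_iff.2 hw), List.rotate_zero w⟩
  exact Finset.insert_eq_of_mem this

lemma count_conj {α : Type*} [DecidableEq α] {w u : List α} (hu : u ∈ conjClass w) (i : α) :
    u.count i = w.count i := by
  rcases Finset.mem_insert.1 hu with h | h
  · rw [h]
  · obtain ⟨r, -, hr⟩ := Finset.mem_image.1 h
    rw [← hr]
    exact (List.rotate_perm w r).count_eq i

lemma conjClass_flatten {α : Type*} [DecidableEq α] (w : List α) (hw : w ≠ []) (p : ℕ)
    (hp : 0 < p) :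
    conjClass ((List.replicate p w).flatten)
      = (conjClass w).image (fun u => (List.replicate p u).flatten) := by
  set n := w.length with hn
  have hn0 : 0 < n := List.length_pos_iff.2 hw
  have hF : (List.replicate p w).flatten ≠ [] := by
    intro h
    have hl : p * w.length = 0 := by rw [← length_flatten_replicate, h]; simp
    rcases Nat.mul_eq_zero.1 hl with h' | h'
    · omega
    · exact hw (List.length_eq_zero_iff.1 h')
  rw [conjClass_eq_image _ hF, conjClass_eq_image _ hw, Finset.image_image,
    length_flatten_replicate]
  ext u
  simp only [Finset.mem_image, Finset.mem_range, Function.comp_apply]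
  constructor
  · rintro ⟨r, -, hr⟩
    refine ⟨r % n, Nat.mod_lt _ hn0, ?_⟩
    rw [← hr, flatten_replicate_rotate, List.rotate_mod]
  · rintro ⟨r, hrn, hr⟩
    exact ⟨r, lt_of_lt_of_le hrn (Nat.le_mul_of_pos_left n hp), by
      rw [flatten_replicate_rotate, hr]⟩

lemma flatten_replicate_injOn {α : Type*} [DecidableEq α] (w : List α) (p : ℕ) (hp : 0 < p) :
    ∀ u ∈ conjClass w, ∀ v ∈ conjClass w,
      (List.replicate p u).flatten = (List.replicate p v).flatten → u = v := by
  have hlen : ∀ u ∈ conjClass w, u.length = w.length := by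
    intro u hu
    rcases Finset.mem_insert.1 hu with h | h
    · rw [h]
    · obtain ⟨r, -, hr⟩ := Finset.mem_image.1 h
      rw [← hr, List.length_rotate]
  have htake : ∀ u : List α, ((List.replicate p u).flatten).take u.length = u := by
    intro u
    obtain ⟨q, rfl⟩ : ∃ q, p = q + 1 := ⟨p - 1, by omega⟩
    rw [List.replicate_succ, List.flatten_cons, List.take_left]
  intro u hu v hv h
  have := congrArg (List.take w.length) h
  rwa [← hlen u hu, htake, hlen u hu, ← hlen v hv, htake] at this

def Mform (x y z a b c : ℚ) : Matrix (Fin 4) (Fin 4) ℚ :=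
  !![1, x, a, c; 0, 1, y, b; 0, 0, 1, z; 0, 0, 0, 1]

lemma Mform_mul (x y z a b c x' y' z' a' b' c' : ℚ) :
    Mform x y z a b c * Mform x' y' z' a' b' c' =
      Mform (x + x') (y + y') (z + z') (a + a' + x * y') (b + b' + y * z')
        (c + c' + x * b' + a * z') := by
  ext i j
  fin_cases i <;> fin_cases j <;>
    simp [Mform, Matrix.mul_apply, Fin.sum_univ_four, Matrix.vecHead, Matrix.vecTail] <;> ring

lemma Mform_zero : Mform 0 0 0 0 0 0 = 1 := by
  ext i j
  fin_cases i <;> fin_cases j <;>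
    simp [Mform, Matrix.one_apply, Matrix.vecHead, Matrix.vecTail]

lemma Mform_pow (x y z a b c : ℚ) (p : ℕ) :
    (Mform x y z a b c) ^ p =
      Mform (p * x) (p * y) (p * z)
        (p * a + (p * (p - 1) / 2) * (x * y))
        (p * b + (p * (p - 1) / 2) * (y * z))
        (p * c + (p * (p - 1) / 2) * (x * b + a * z) +
          (p * (p - 1) * (p - 2) / 6) * (x * y * z)) := by
  induction p with
  | zero => simp [Mform_zero]
  | succ p ih =>
      rw [pow_succ, ih, Mform_mul]
      push_cast
      congr 1 <;> ring

lemma Mform_apply02 (x y z a b c : ℚ) : Mform x y z a b c 0 2 = a := rfl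
lemma Mform_apply13 (x y z a b c : ℚ) : Mform x y z a b c 1 3 = b := rfl
lemma Mform_apply03 (x y z a b c : ℚ) : Mform x y z a b c 0 3 = c := rfl

lemma parikhLetter_zero : parikhLetter (0 : Fin 3) = Mform 1 0 0 0 0 0 := by
  ext i j
  fin_cases i <;> fin_cases j <;>
    simp [parikhLetter, Mform, Matrix.single, Matrix.one_apply, Matrix.vecHead,
      Matrix.vecTail]

lemma parikhLetter_one : parikhLetter (1 : Fin 3) = Mform 0 1 0 0 0 0 := by
  ext i j
  fin_cases i <;> fin_cases j <;>
    simp [parikhLetter, Mform, Matrix.single, Matrix.one_apply, Matrix.vecHead,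
      Matrix.vecTail]

lemma parikhLetter_two : parikhLetter (2 : Fin 3) = Mform 0 0 1 0 0 0 := by
  ext i j
  fin_cases i <;> fin_cases j <;>
    simp [parikhLetter, Mform, Matrix.single, Matrix.one_apply, Matrix.vecHead,
      Matrix.vecTail] <;> decide

lemma parikhMatrix_nil {s : ℕ} : parikhMatrix ([] : List (Fin s)) = 1 := rfl

lemma parikhMatrix_cons_s10 {s : ℕ} (a : Fin s) (u : List (Fin s)) :
    parikhMatrix (a :: u) = parikhLetter a * parikhMatrix u := by
  simp [parikhMatrix]

lemma parikhMatrix_append {s : ℕ} (u v : List (Fin s)) :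
    parikhMatrix (u ++ v) = parikhMatrix u * parikhMatrix v := by
  simp [parikhMatrix]

lemma parikhMatrix_flatten_replicate {s : ℕ} (p : ℕ) (u : List (Fin s)) :
    parikhMatrix ((List.replicate p u).flatten) = (parikhMatrix u) ^ p := by
  induction p with
  | zero => simp [parikhMatrix_nil]
  | succ q ih =>
    rw [List.replicate_succ, List.flatten_cons, parikhMatrix_append, ih, pow_succ']

lemma parikh_exists (u : List (Fin 3)) : ∃ a b c : ℚ,
    parikhMatrix u = Mform (u.count 0 : ℚ) (u.count 1 : ℚ) (u.count 2 : ℚ) a b c := by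
  induction u with
  | nil => exact ⟨0, 0, 0, by simp [parikhMatrix_nil, Mform_zero]⟩
  | cons q t ih =>
    obtain ⟨a, b, c, h⟩ := ih
    rcases q with ⟨(_ | _ | _ | m), hq⟩
    · simp only [show (⟨0, hq⟩ : Fin 3) = 0 from rfl]
      refine ⟨a + (t.count 1 : ℚ), b, c + b, ?_⟩
      rw [parikhMatrix_cons_s10, parikhLetter_zero, h, Mform_mul]
      push_cast [List.count_cons]
      simp only [if_true]
      congr 1 <;> ring
    · simp only [show (⟨1, hq⟩ : Fin 3) = 1 from rfl]
      refine ⟨a, b + (t.count 2 : ℚ), c, ?_⟩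
      rw [parikhMatrix_cons_s10, parikhLetter_one, h, Mform_mul]
      push_cast [List.count_cons]
      simp only [if_true]
      congr 1 <;> ring
    · simp only [show (⟨2, hq⟩ : Fin 3) = 2 from rfl]
      refine ⟨a, b, c, ?_⟩
      rw [parikhMatrix_cons_s10, parikhLetter_two, h, Mform_mul]
      push_cast [List.count_cons]
      simp only [if_true]
      congr 1 <;> ring
    · exact absurd hq (by omega)

lemma parikh_eq_Mform (u : List (Fin 3)) :
    parikhMatrix u = Mform (u.count 0 : ℚ) (u.count 1 : ℚ) (u.count 2 : ℚ)
      (parikhMatrix u 0 2) (parikhMatrix u 1 3) (parikhMatrix u 0 3) := by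
  obtain ⟨a, b, c, h⟩ := parikh_exists u
  rw [h, Mform_apply02, Mform_apply13, Mform_apply03]

lemma smul_sum_Mform {ι : Type*} (s : Finset ι) (hc : ((s.card : ℚ)) ≠ 0) (x y z : ℚ)
    (f g k : ι → ℚ) :
    ((s.card : ℚ))⁻¹ • ∑ u ∈ s, Mform x y z (f u) (g u) (k u) =
      Mform x y z ((s.card : ℚ)⁻¹ * ∑ u ∈ s, f u) ((s.card : ℚ)⁻¹ * ∑ u ∈ s, g u)
        ((s.card : ℚ)⁻¹ * ∑ u ∈ s, k u) := by
  ext i j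
  fin_cases i <;> fin_cases j <;>
    simp [Mform, Matrix.sum_apply, Matrix.smul_apply, Finset.sum_const, nsmul_eq_mul,
      Matrix.vecHead, Matrix.vecTail, smul_eq_mul, Finset.mul_sum] <;>
    field_simp

/-- Proposition 23 (ternary case): for a word `w` over `{a < b < c} = Fin 3` and a positive
integer `p`, the Parikh matrix of the circular word `[w^p]` equals the `p`-th power of the
Parikh matrix of `[w]`. -/
theorem stmt_10 (w : List (Fin 3)) (p : ℕ) (hp : 0 < p) :
    circParikh ((List.replicate p w).flatten) = (circParikh w) ^ p := by
  by_cases hw : w = []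
  · subst hw
    rw [flatten_replicate_nil]
    have h1 : circParikh ([] : List (Fin 3)) = 1 := by
      simp [circParikh, conjClass, parikhMatrix_nil]
    rw [h1, one_pow]
  · have hwC : w ∈ conjClass w := Finset.mem_insert_self _ _
    have hc : ((conjClass w).card : ℚ) ≠ 0 := by
      have : 0 < (conjClass w).card := Finset.card_pos.2 ⟨w, hwC⟩
      exact_mod_cast this.ne'
    have himg := conjClass_flatten w hw p hp
    have hinj := flatten_replicate_injOn w p hp
    have hcardeq : (conjClass ((List.replicate p w).flatten)).card = (conjClass w).card := by
      rw [himg]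
      exact Finset.card_image_of_injOn fun u hu v hv h => hinj u hu v hv h
    set x := (w.count 0 : ℚ) with hx
    set y := (w.count 1 : ℚ) with hy
    set z := (w.count 2 : ℚ) with hz
    set A : List (Fin 3) → ℚ := fun u => parikhMatrix u 0 2 with hA
    set B : List (Fin 3) → ℚ := fun u => parikhMatrix u 1 3 with hB
    set G : List (Fin 3) → ℚ := fun u => parikhMatrix u 0 3 with hG
    have hM : ∀ u ∈ conjClass w, parikhMatrix u = Mform x y z (A u) (B u) (G u) := by
      intro u hu
      rw [hx, hy, hz, hA, hB, hG]
      rw [parikh_eq_Mform u, count_conj hu 0, count_conj hu 1, count_conj hu 2]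
    set P : ℚ := (p : ℚ) with hP
    set E2 : ℚ := P * (P - 1) / 2 with hE2
    set E3 : ℚ := P * (P - 1) * (P - 2) / 6 with hE3
    have hsum1 : ∑ u ∈ conjClass w, parikhMatrix ((List.replicate p u).flatten)
        = ∑ u ∈ conjClass w, Mform (P * x) (P * y) (P * z)
            (P * A u + E2 * (x * y)) (P * B u + E2 * (y * z))
            (P * G u + E2 * (x * B u + A u * z) + E3 * (x * y * z)) := by
      refine Finset.sum_congr rfl fun u hu => ?_
      rw [parikhMatrix_flatten_replicate, hM u hu, Mform_pow, hP, hE2, hE3]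
    have hsum2 : ∑ u ∈ conjClass w, parikhMatrix u
        = ∑ u ∈ conjClass w, Mform x y z (A u) (B u) (G u) :=
      Finset.sum_congr rfl fun u hu => hM u hu
    unfold circParikh
    rw [himg, Finset.sum_image hinj,
      Finset.card_image_of_injOn (fun u hu v hv h => hinj u hu v hv h), hsum1, hsum2,
      smul_sum_Mform _ hc, smul_sum_Mform _ hc, Mform_pow]
    set c : ℚ := ((conjClass w).card : ℚ) with hcc
    have hSA : ∑ u ∈ conjClass w, (P * A u + E2 * (x * y))
        = P * (∑ u ∈ conjClass w, A u) + c * (E2 * (x * y)) := by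
      rw [Finset.sum_add_distrib, Finset.sum_const, ← Finset.mul_sum, nsmul_eq_mul]
    have hSB : ∑ u ∈ conjClass w, (P * B u + E2 * (y * z))
        = P * (∑ u ∈ conjClass w, B u) + c * (E2 * (y * z)) := by
      rw [Finset.sum_add_distrib, Finset.sum_const, ← Finset.mul_sum, nsmul_eq_mul]
    have hSG : ∑ u ∈ conjClass w, (P * G u + E2 * (x * B u + A u * z) + E3 * (x * y * z))
        = P * (∑ u ∈ conjClass w, G u)
          + E2 * (x * (∑ u ∈ conjClass w, B u) + (∑ u ∈ conjClass w, A u) * z)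
          + c * (E3 * (x * y * z)) := by
      rw [Finset.sum_add_distrib, Finset.sum_add_distrib, Finset.sum_const, ← Finset.mul_sum,
        ← Finset.mul_sum, nsmul_eq_mul]
      congr 2
      rw [Finset.sum_add_distrib, ← Finset.mul_sum, ← Finset.sum_mul]
    have aux : ∀ X Y : ℚ, c⁻¹ * (X + c * Y) = c⁻¹ * X + Y := by
      intro X Y
      rw [mul_add, ← mul_assoc, inv_mul_cancel₀ hc, one_mul]
    rw [hSA, hSB, hSG, aux, aux, aux]
    congr 1 <;> ring
end
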